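/- Let (U,V) be a pair of random variables with values in a product measurable space E × F, with marginal distributions P_U and P_V. For every measurable function h on E × F (with the relevant expectations well-defined), E_U[ 1 / E_V[exp(−h(U,V))] ] ≤ ( E_V[ 1 / E_U[exp(h(U,V))] ] )^{−1}, where E_U denotes expectation over U ∼ P_U with V fixed and E_V expectation over V ∼ P_V with U fixed. -/

import Mathlib

open MeasureTheory ENNReal

/-- Audibert–Catoni's lemma: for probability measures `μ` on `E`, `ν` on `F` and a
measurable function `h : E × F → ℝ` (with all the relevant integrals finite and positive),
`∫_E (∫_F e^{−h(u,v)} dν(v))⁻¹ dμ(u) ≤ (∫_F (∫_E e^{h(u,v)} dμ(u))⁻¹ dν(v))⁻¹`. -/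
theorem stmt3 {E F : Type*} [MeasurableSpace E] [MeasurableSpace F]
    (μ : Measure E) (ν : Measure F) [IsProbabilityMeasure μ] [IsProbabilityMeasure ν]
    (h : E × F → ℝ) (hmeas : Measurable h)
    (hint1 : ∀ u, Integrable (fun v => Real.exp (-h (u, v))) ν)
    (hint2 : Integrable (fun u => (∫ v, Real.exp (-h (u, v)) ∂ν)⁻¹) μ)
    (hint3 : ∀ v, Integrable (fun u => Real.exp (h (u, v))) μ)
    (hint4 : Integrable (fun v => (∫ u, Real.exp (h (u, v)) ∂μ)⁻¹) ν)
    (hpos : 0 < ∫ v, (∫ u, Real.exp (h (u, v)) ∂μ)⁻¹ ∂ν) :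
    ∫ u, (∫ v, Real.exp (-h (u, v)) ∂ν)⁻¹ ∂μ ≤
      (∫ v, (∫ u, Real.exp (h (u, v)) ∂μ)⁻¹ ∂ν)⁻¹ := by
  classical
  -- real inner integrals
  set Iν : E → ℝ := fun u => ∫ v, Real.exp (-h (u, v)) ∂ν with hIν
  set Iμ : F → ℝ := fun v => ∫ u, Real.exp (h (u, v)) ∂μ with hIμ
  have hIν_pos : ∀ u, 0 < Iν u := fun u => integral_exp_pos (hint1 u)
  have hIμ_pos : ∀ v, 0 < Iμ v := fun v => integral_exp_pos (hint3 v)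
  -- ENNReal versions
  set a : E → ℝ≥0∞ := fun u => ∫⁻ v, ENNReal.ofReal (Real.exp (-h (u, v))) ∂ν with ha_def
  set b : F → ℝ≥0∞ := fun v => ∫⁻ u, ENNReal.ofReal (Real.exp (h (u, v))) ∂μ with hb_def
  have ha_eq : ∀ u, a u = ENNReal.ofReal (Iν u) := fun u =>
    (ofReal_integral_eq_lintegral_ofReal (hint1 u)
      (Filter.Eventually.of_forall fun v => (Real.exp_pos _).le)).symm
  have hb_eq : ∀ v, b v = ENNReal.ofReal (Iμ v) := fun v =>
    (ofReal_integral_eq_lintegral_ofReal (hint3 v)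
      (Filter.Eventually.of_forall fun u => (Real.exp_pos _).le)).symm
  have ha_ne_top : ∀ u, a u ≠ ⊤ := fun u => by rw [ha_eq]; exact ENNReal.ofReal_ne_top
  have ha_ne_zero : ∀ u, a u ≠ 0 := fun u => by
    rw [ha_eq]; simpa using (ENNReal.ofReal_pos.2 (hIν_pos u)).ne'
  have hb_ne_top : ∀ v, b v ≠ ⊤ := fun v => by rw [hb_eq]; exact ENNReal.ofReal_ne_top
  have hb_ne_zero : ∀ v, b v ≠ 0 := fun v => by
    rw [hb_eq]; simpa using (ENNReal.ofReal_pos.2 (hIμ_pos v)).ne'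
  -- measurability
  have hmeas_exp : Measurable fun p : E × F => ENNReal.ofReal (Real.exp (h p)) :=
    (Real.measurable_exp.comp hmeas).ennreal_ofReal
  have hmeas_expneg : Measurable fun p : E × F => ENNReal.ofReal (Real.exp (-h p)) :=
    (Real.measurable_exp.comp hmeas.neg).ennreal_ofReal
  have hb_meas : Measurable b := hmeas_exp.lintegral_prod_left'
  have ha_meas : Measurable a := hmeas_expneg.lintegral_prod_right'
  -- key ENNReal quantities
  set A : ℝ≥0∞ := ∫⁻ u, (a u)⁻¹ ∂μ with hA_def
  set B : ℝ≥0∞ := ∫⁻ v, (b v)⁻¹ ∂ν with hB_def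
  have hA_eq : ENNReal.ofReal (∫ u, (Iν u)⁻¹ ∂μ) = A := by
    rw [ofReal_integral_eq_lintegral_ofReal hint2
      (Filter.Eventually.of_forall fun u => (inv_pos.2 (hIν_pos u)).le)]
    exact lintegral_congr fun u => by
      rw [ENNReal.ofReal_inv_of_pos (hIν_pos u), ← ha_eq]
  have hB_eq : ENNReal.ofReal (∫ v, (Iμ v)⁻¹ ∂ν) = B := by
    rw [ofReal_integral_eq_lintegral_ofReal hint4
      (Filter.Eventually.of_forall fun v => (inv_pos.2 (hIμ_pos v)).le)]
    exact lintegral_congr fun v => by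
      rw [ENNReal.ofReal_inv_of_pos (hIμ_pos v), ← hb_eq]
  have hB_ne_zero : B ≠ 0 := by
    rw [← hB_eq]; simpa using (ENNReal.ofReal_pos.2 hpos).ne'
  have hB_ne_top : B ≠ ⊤ := by rw [← hB_eq]; exact ENNReal.ofReal_ne_top
  -- Cauchy–Schwarz for each fixed u
  have key : ∀ u, B ^ (2:ℝ) ≤
      (∫⁻ v, (b v)⁻¹ ^ (2:ℝ) * ENNReal.ofReal (Real.exp (h (u, v))) ∂ν) * a u := by
    intro u
    have hconj : Real.HolderConjugate 2 2 := Real.HolderConjugate.two_two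
    set f : F → ℝ≥0∞ := fun v => (b v)⁻¹ * ENNReal.ofReal (Real.exp (h (u, v) / 2)) with hf
    set g : F → ℝ≥0∞ := fun v => ENNReal.ofReal (Real.exp (-(h (u, v) / 2))) with hg
    have hfm : AEMeasurable f ν :=
      (hb_meas.inv.mul ((Real.measurable_exp.comp
        ((hmeas.comp (measurable_prodMk_left)).div_const 2)).ennreal_ofReal)).aemeasurable
    have hgm : AEMeasurable g ν :=
      ((Real.measurable_exp.comp
        ((hmeas.comp (measurable_prodMk_left)).div_const 2).neg).ennreal_ofReal).aemeasurable
    have hCS := ENNReal.lintegral_mul_le_Lp_mul_Lq ν hconj hfm hgm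
    have hfg : ∀ v, (f * g) v = (b v)⁻¹ := by
      intro v
      simp only [Pi.mul_apply, hf, hg, mul_assoc, ← ENNReal.ofReal_mul (Real.exp_pos _).le,
        ← Real.exp_add]
      norm_num
    have hsq : ∀ s : ℝ, ENNReal.ofReal (Real.exp s) ^ (2:ℝ) = ENNReal.ofReal (Real.exp (s * 2)) := by
      intro s
      rw [ENNReal.ofReal_rpow_of_pos (Real.exp_pos s), ← Real.exp_one_rpow s,
        ← Real.rpow_mul (Real.exp_pos 1).le, Real.exp_one_rpow]
    have hf2 : ∀ v, f v ^ (2:ℝ) = (b v)⁻¹ ^ (2:ℝ) * ENNReal.ofReal (Real.exp (h (u, v))) := by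
      intro v
      rw [hf, ENNReal.mul_rpow_of_nonneg _ _ (by norm_num : (0:ℝ) ≤ 2), hsq,
        div_mul_cancel₀ _ (two_ne_zero)]
    have hg2 : ∀ v, g v ^ (2:ℝ) = ENNReal.ofReal (Real.exp (-h (u, v))) := by
      intro v
      rw [hg, hsq, show -(h (u, v) / 2) * 2 = -h (u, v) by ring]
    rw [lintegral_congr hfg] at hCS
    simp only [hf2, hg2] at hCS
    calc B ^ (2:ℝ)
        ≤ ((∫⁻ v, (b v)⁻¹ ^ (2:ℝ) * ENNReal.ofReal (Real.exp (h (u, v))) ∂ν) ^ (1/2 : ℝ)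
            * (∫⁻ v, ENNReal.ofReal (Real.exp (-h (u, v))) ∂ν) ^ (1/2 : ℝ)) ^ (2:ℝ) := by
          exact ENNReal.rpow_le_rpow hCS (by norm_num)
      _ = (∫⁻ v, (b v)⁻¹ ^ (2:ℝ) * ENNReal.ofReal (Real.exp (h (u, v))) ∂ν) * a u := by
          rw [ENNReal.mul_rpow_of_nonneg _ _ (by norm_num : (0:ℝ) ≤ 2),
            ← ENNReal.rpow_mul, ← ENNReal.rpow_mul]
          norm_num [ha_def]
  -- divide by `a u` and integrate over `u`
  have key2 : ∀ u, B ^ (2:ℝ) * (a u)⁻¹ ≤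
      ∫⁻ v, (b v)⁻¹ ^ (2:ℝ) * ENNReal.ofReal (Real.exp (h (u, v))) ∂ν := by
    intro u
    have := mul_le_mul_left (key u) (a u)⁻¹
    rwa [mul_assoc, ENNReal.mul_inv_cancel (ha_ne_zero u) (ha_ne_top u), mul_one] at this
  have step : B ^ (2:ℝ) * A ≤ B := by
    have hmono := lintegral_mono key2 (μ := μ)
    rw [lintegral_const_mul _ (f := fun u => (a u)⁻¹) ha_meas.inv] at hmono
    refine hmono.trans_eq ?_
    rw [lintegral_lintegral_swap]
    · refine (lintegral_congr fun v => ?_)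
      have hm : Measurable fun u => ENNReal.ofReal (Real.exp (h (u, v))) :=
        hmeas_exp.comp (measurable_prodMk_right)
      rw [lintegral_const_mul _ hm]
      have : (b v)⁻¹ ^ (2:ℝ) * b v = (b v)⁻¹ := by
        rw [show (2:ℝ) = (1:ℝ) + 1 by norm_num,
          ENNReal.rpow_add _ _ (by simpa using hb_ne_top v) (by simpa using hb_ne_zero v),
          ENNReal.rpow_one, mul_assoc, ENNReal.inv_mul_cancel (hb_ne_zero v) (hb_ne_top v),
          mul_one]
      exact this
    · exact ((hb_meas.inv.pow_const _).comp measurable_snd).aemeasurable.mul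
        hmeas_exp.aemeasurable
  -- conclude `A ≤ B⁻¹`
  have hAB : A ≤ B⁻¹ := by
    rw [ENNReal.le_inv_iff_mul_le]
    have := mul_le_mul_left step B⁻¹
    rwa [ENNReal.mul_inv_cancel hB_ne_zero hB_ne_top,
      show B ^ (2:ℝ) = B * B by
        rw [show (2:ℝ) = (1:ℝ)+1 by norm_num, ENNReal.rpow_add _ _ hB_ne_zero hB_ne_top,
          ENNReal.rpow_one],
      mul_assoc, mul_assoc, mul_comm A B⁻¹, ← mul_assoc B B⁻¹,
      ENNReal.mul_inv_cancel hB_ne_zero hB_ne_top, one_mul, mul_comm] at this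
  -- back to real integrals
  have hfin : (∫ v, (Iμ v)⁻¹ ∂ν)⁻¹ = (B⁻¹).toReal := by
    rw [← hB_eq, ← ENNReal.ofReal_inv_of_pos hpos, ENNReal.toReal_ofReal (by positivity)]
  rw [hfin, ← ENNReal.toReal_ofReal (integral_nonneg fun u => (inv_pos.2 (hIν_pos u)).le)]
  · exact ENNReal.toReal_mono (by simpa using hB_ne_zero) (hA_eq ▸ hAB)
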